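/- Let (X,d) be a finite metric space and let Q = (q_{xy}) ∈ ℝ^{X×X} be a positive semidefinite matrix all of whose row sums vanish, such that Σ_{(x,y) : q_{xy} < 0} d(x,y)^2·(−q_{xy}) > 0. Then c_2(X,d)^2 ≥ (Σ_{(x,y) : q_{xy} > 0} d(x,y)^2·q_{xy}) / (Σ_{(x,y) : q_{xy} < 0} d(x,y)^2·(−q_{xy})). -/

import Mathlib

open scoped BigOperators
open scoped RealInnerProductSpace

/-- The least distortion `c₂(X,d)` of an embedding of a finite metric space
into Euclidean space. -/
noncomputable def leastDistortion (X : Type*) [Fintype X] [MetricSpace X] : ℝ :=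
  sInf {D : ℝ | ∃ (m : ℕ) (ρ : X → EuclideanSpace ℝ (Fin m)),
    ∀ x y : X, dist x y ≤ ‖ρ x - ρ y‖ ∧ ‖ρ x - ρ y‖ ≤ D * dist x y}

lemma exists_embedding (X : Type*) [Fintype X] [MetricSpace X] :
    ∃ D : ℝ, ∃ (m : ℕ) (ρ : X → EuclideanSpace ℝ (Fin m)),
      ∀ x y : X, dist x y ≤ ‖ρ x - ρ y‖ ∧ ‖ρ x - ρ y‖ ≤ D * dist x y := by
  classical
  set n := Fintype.card X with hn
  let e : X ≃ Fin n := Fintype.equivFin X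
  set ρ : X → EuclideanSpace ℝ (Fin n) :=
    fun x => (WithLp.equiv 2 (Fin n → ℝ)).symm (fun i => dist x (e.symm i)) with hρ
  refine ⟨Real.sqrt n, n, ρ, fun x y => ?_⟩
  have happ : ∀ i : Fin n, (ρ x - ρ y) i = dist x (e.symm i) - dist y (e.symm i) := by
    intro i; rfl
  have hnorm : ‖ρ x - ρ y‖ = Real.sqrt (∑ i, ‖(ρ x - ρ y) i‖ ^ 2) :=
    EuclideanSpace.norm_eq _
  constructor
  · have h1 : (dist x y) ^ 2 ≤ ∑ i, ‖(ρ x - ρ y) i‖ ^ 2 := by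
      have := Finset.single_le_sum (f := fun i => ‖(ρ x - ρ y) i‖ ^ 2)
        (fun i _ => by positivity) (Finset.mem_univ (e x))
      calc (dist x y) ^ 2 = ‖(ρ x - ρ y) (e x)‖ ^ 2 := by
            rw [happ, Equiv.symm_apply_apply, dist_self, Real.norm_eq_abs, zero_sub, abs_neg,
              abs_of_nonneg dist_nonneg, dist_comm]
        _ ≤ _ := this
    calc dist x y = Real.sqrt ((dist x y) ^ 2) := (Real.sqrt_sq dist_nonneg).symm
      _ ≤ Real.sqrt (∑ i, ‖(ρ x - ρ y) i‖ ^ 2) := Real.sqrt_le_sqrt h1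
      _ = ‖ρ x - ρ y‖ := hnorm.symm
  · have h2 : ∑ i, ‖(ρ x - ρ y) i‖ ^ 2 ≤ (n : ℝ) * (dist x y) ^ 2 := by
      calc ∑ i, ‖(ρ x - ρ y) i‖ ^ 2 ≤ ∑ _i : Fin n, (dist x y) ^ 2 := by
            refine Finset.sum_le_sum fun i _ => ?_
            rw [happ, Real.norm_eq_abs]
            exact pow_le_pow_left₀ (abs_nonneg _) (abs_dist_sub_le x y (e.symm i)) 2
        _ = (n : ℝ) * (dist x y) ^ 2 := by simp [Finset.sum_const, mul_comm]
    calc ‖ρ x - ρ y‖ = Real.sqrt (∑ i, ‖(ρ x - ρ y) i‖ ^ 2) := hnorm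
      _ ≤ Real.sqrt ((n : ℝ) * (dist x y) ^ 2) := Real.sqrt_le_sqrt h2
      _ = Real.sqrt n * dist x y := by
          rw [Real.sqrt_mul (Nat.cast_nonneg n), Real.sqrt_sq dist_nonneg]

theorem stmt4 {X : Type*} [Fintype X] [MetricSpace X]
    (Q : Matrix X X ℝ) (hQ : Q.PosSemidef) (hrow : ∀ x : X, ∑ y : X, Q x y = 0)
    (hpos : 0 < ∑ x : X, ∑ y : X, if Q x y < 0 then dist x y ^ 2 * (-(Q x y)) else 0) :
    leastDistortion X ^ 2 ≥
      (∑ x : X, ∑ y : X, if 0 < Q x y then dist x y ^ 2 * Q x y else 0) /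
      (∑ x : X, ∑ y : X, if Q x y < 0 then dist x y ^ 2 * (-(Q x y)) else 0) := by
  classical
  set P : ℝ := ∑ x : X, ∑ y : X, if 0 < Q x y then dist x y ^ 2 * Q x y else 0 with hP
  set N : ℝ := ∑ x : X, ∑ y : X, if Q x y < 0 then dist x y ^ 2 * (-(Q x y)) else 0 with hN
  have hPnn : 0 ≤ P := by
    refine Finset.sum_nonneg fun x _ => Finset.sum_nonneg fun y _ => ?_
    split_ifs with h
    · positivity
    · exact le_rfl
  have hrnn : 0 ≤ P / N := div_nonneg hPnn hpos.le
  -- a pair at positive distance with negative entry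
  obtain ⟨x₀, -, hx₀⟩ := Finset.exists_ne_zero_of_sum_ne_zero (ne_of_gt hpos)
  obtain ⟨y₀, -, hy₀⟩ := Finset.exists_ne_zero_of_sum_ne_zero hx₀
  have hd₀ : 0 < dist x₀ y₀ := by
    by_contra h
    have : dist x₀ y₀ = 0 := le_antisymm (not_lt.1 h) dist_nonneg
    apply hy₀
    split_ifs <;> simp [this]
  -- symmetry and column sums
  have hsym : ∀ x y : X, Q x y = Q y x := by
    intro x y
    have := congrFun (congrFun hQ.1 x) y
    simpa [Matrix.conjTranspose_apply] using this.symm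
  have hcol : ∀ y : X, ∑ x : X, Q x y = 0 := by
    intro y
    rw [Finset.sum_congr rfl fun x _ => hsym x y]
    exact hrow y
  -- key bound for every admissible D
  have key : ∀ D ∈ {D : ℝ | ∃ (m : ℕ) (ρ : X → EuclideanSpace ℝ (Fin m)),
      ∀ x y : X, dist x y ≤ ‖ρ x - ρ y‖ ∧ ‖ρ x - ρ y‖ ≤ D * dist x y},
      Real.sqrt (P / N) ≤ D := by
    rintro D ⟨m, ρ, hρ⟩
    have hD0 : 0 ≤ D := by
      have h1 := (hρ x₀ y₀).1
      have h2 := (hρ x₀ y₀).2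
      nlinarith
    -- PSD inequality
    have hpsd : 0 ≤ ∑ x : X, ∑ y : X, Q x y * ⟪ρ x, ρ y⟫ := by
      have hin : ∀ x y : X, (⟪ρ x, ρ y⟫ : ℝ) = ∑ i, ρ x i * ρ y i := by
        intro x y
        simp [PiLp.inner_apply, RCLike.inner_apply, mul_comm]
      have hcoord : ∀ i : Fin m, 0 ≤ ∑ x : X, ∑ y : X, Q x y * (ρ x i * ρ y i) := by
        intro i
        have h := hQ.dotProduct_mulVec_nonneg (fun x => ρ x i)
        simp only [dotProduct, Matrix.mulVec, Pi.star_apply, star_trivial] at h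
        calc (0:ℝ) ≤ ∑ x : X, star (ρ x i) * ∑ y : X, Q x y * ρ y i := h
          _ = ∑ x : X, ∑ y : X, Q x y * (ρ x i * ρ y i) := by
              refine Finset.sum_congr rfl fun x _ => ?_
              rw [star_trivial, Finset.mul_sum]
              exact Finset.sum_congr rfl fun y _ => by ring
      calc (0:ℝ) ≤ ∑ i : Fin m, ∑ x : X, ∑ y : X, Q x y * (ρ x i * ρ y i) :=
            Finset.sum_nonneg fun i _ => hcoord i
        _ = ∑ x : X, ∑ i : Fin m, ∑ y : X, Q x y * (ρ x i * ρ y i) := Finset.sum_comm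
        _ = ∑ x : X, ∑ y : X, ∑ i : Fin m, Q x y * (ρ x i * ρ y i) :=
            Finset.sum_congr rfl fun x _ => Finset.sum_comm
        _ = ∑ x : X, ∑ y : X, Q x y * ⟪ρ x, ρ y⟫ := by
            refine Finset.sum_congr rfl fun x _ => Finset.sum_congr rfl fun y _ => ?_
            rw [hin, Finset.mul_sum]
    -- the quadratic form on squared embedded distances is nonpositive
    have hA : ∑ x : X, ∑ y : X, Q x y * ‖ρ x‖ ^ 2 = 0 := by
      refine Finset.sum_eq_zero fun x _ => ?_
      rw [← Finset.sum_mul, hrow x, zero_mul]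
    have hB : ∑ x : X, ∑ y : X, Q x y * ‖ρ y‖ ^ 2 = 0 := by
      rw [Finset.sum_comm]
      refine Finset.sum_eq_zero fun y _ => ?_
      rw [← Finset.sum_mul, hcol y, zero_mul]
    have hquad : ∑ x : X, ∑ y : X, Q x y * ‖ρ x - ρ y‖ ^ 2 ≤ 0 := by
      have heq : ∑ x : X, ∑ y : X, Q x y * ‖ρ x - ρ y‖ ^ 2
          = (∑ x : X, ∑ y : X, Q x y * ‖ρ x‖ ^ 2)
            + (∑ x : X, ∑ y : X, Q x y * ‖ρ y‖ ^ 2)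
            - 2 * ∑ x : X, ∑ y : X, Q x y * ⟪ρ x, ρ y⟫ := by
        rw [Finset.mul_sum, ← Finset.sum_add_distrib, ← Finset.sum_sub_distrib]
        refine Finset.sum_congr rfl fun x _ => ?_
        rw [Finset.mul_sum, ← Finset.sum_add_distrib, ← Finset.sum_sub_distrib]
        refine Finset.sum_congr rfl fun y _ => ?_
        rw [norm_sub_sq_real]
        ring
      rw [heq, hA, hB]
      linarith
    -- split into positive and negative parts
    have hsplit : ∑ x : X, ∑ y : X, Q x y * ‖ρ x - ρ y‖ ^ 2
        = (∑ x : X, ∑ y : X, if 0 < Q x y then ‖ρ x - ρ y‖ ^ 2 * Q x y else 0)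
          - (∑ x : X, ∑ y : X, if Q x y < 0 then ‖ρ x - ρ y‖ ^ 2 * (-(Q x y)) else 0) := by
      rw [← Finset.sum_sub_distrib]
      refine Finset.sum_congr rfl fun x _ => ?_
      rw [← Finset.sum_sub_distrib]
      refine Finset.sum_congr rfl fun y _ => ?_
      by_cases h1 : 0 < Q x y
      · rw [if_pos h1, if_neg (by linarith)]; ring
      · by_cases h2 : Q x y < 0
        · rw [if_neg h1, if_pos h2]; ring
        · have h3 : Q x y = 0 := le_antisymm (not_lt.1 h1) (not_lt.1 h2)
          rw [if_neg h1, if_neg h2, h3]; ring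
    have hPle : P ≤ ∑ x : X, ∑ y : X, if 0 < Q x y then ‖ρ x - ρ y‖ ^ 2 * Q x y else 0 := by
      refine Finset.sum_le_sum fun x _ => Finset.sum_le_sum fun y _ => ?_
      split_ifs with h
      · exact mul_le_mul_of_nonneg_right
          (pow_le_pow_left₀ dist_nonneg (hρ x y).1 2) h.le
      · exact le_rfl
    have hNle : (∑ x : X, ∑ y : X, if Q x y < 0 then ‖ρ x - ρ y‖ ^ 2 * (-(Q x y)) else 0)
        ≤ D ^ 2 * N := by
      rw [hN, Finset.mul_sum]
      refine Finset.sum_le_sum fun x _ => ?_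
      rw [Finset.mul_sum]
      refine Finset.sum_le_sum fun y _ => ?_
      split_ifs with h
      · have h1 : ‖ρ x - ρ y‖ ^ 2 ≤ (D * dist x y) ^ 2 :=
          pow_le_pow_left₀ (norm_nonneg _) (hρ x y).2 2
        have h2 : (0:ℝ) ≤ -(Q x y) := by linarith
        calc ‖ρ x - ρ y‖ ^ 2 * (-(Q x y)) ≤ (D * dist x y) ^ 2 * (-(Q x y)) :=
              mul_le_mul_of_nonneg_right h1 h2
          _ = D ^ 2 * (dist x y ^ 2 * (-(Q x y))) := by ring
      · simp
    have hPN : P ≤ D ^ 2 * N := by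
      have := hsplit ▸ hquad
      linarith
    have hrD : P / N ≤ D ^ 2 := (div_le_iff₀ hpos).2 (by linarith [hPN])
    calc Real.sqrt (P / N) ≤ Real.sqrt (D ^ 2) := Real.sqrt_le_sqrt hrD
      _ = D := Real.sqrt_sq hD0
  have hsne : {D : ℝ | ∃ (m : ℕ) (ρ : X → EuclideanSpace ℝ (Fin m)),
      ∀ x y : X, dist x y ≤ ‖ρ x - ρ y‖ ∧ ‖ρ x - ρ y‖ ≤ D * dist x y}.Nonempty := by
    obtain ⟨D, hD⟩ := exists_embedding X
    exact ⟨D, hD⟩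
  have hle : Real.sqrt (P / N) ≤ leastDistortion X := le_csInf hsne key
  have hfin := pow_le_pow_left₀ (Real.sqrt_nonneg (P / N)) hle 2
  rw [Real.sq_sqrt hrnn] at hfin
  exact hfin
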